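/- Let n ≥ 1 and 0 < m < n be integers, and let μ ∈ ℤ^n be dominant. Let v ∈ ℚ^n be dominant. Then the following are equivalent: (1) there exists w = (γ, x) ∈ ℤ^n ⋊ S_n with Σ_{j=1}^n γ_j = Σ_{j=1}^n μ_j such that the dominant Newton point of w·σ_{m,n} equals v; (2) Σ_{j=1}^n v_j = Σ_{j=1}^n μ_j + m, and Σ_{j=1}^k v_j ∈ ℤ for every k ∈ {1,…,n−1} with v_k > v_{k+1}. -/

import Mathlib

/-- `psum v k` is the partial sum `v₁ + ⋯ + v_k` of the first `k` entries of `v`. -/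
def psum {n : ℕ} (v : Fin n → ℚ) (k : ℕ) : ℚ :=
  ∑ j ∈ Finset.univ.filter (fun j : Fin n => (j : ℕ) < k), v j

/-- The action of `S_n` on `ℚⁿ`: `(x • λ)_i = λ_{x⁻¹(i)}`. -/
def permAct {n : ℕ} (x : Equiv.Perm (Fin n)) (l : Fin n → ℚ) : Fin n → ℚ :=
  fun i => l (x⁻¹ i)

/-- Multiplication in the (extended affine Weyl) group `ℚⁿ ⋊ Sₙ`:
`(λ, x)(λ', x') = (λ + x·λ', xx')`. Elements `(λ, 1)` are the translations `t^λ`. -/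
def Wmul {n : ℕ} (w w' : (Fin n → ℚ) × Equiv.Perm (Fin n)) :
    (Fin n → ℚ) × Equiv.Perm (Fin n) :=
  (w.1 + permAct w.2 w'.1, w.2 * w'.2)

/-- The Newton point of `w = (λ, y) ∈ ℚⁿ ⋊ Sₙ`: `ν_w = (Σ_{k=0}^{N-1} y^k·λ)/N`
for `N = orderOf y` (which satisfies `y^N = 1`). -/
noncomputable def newtonPt {n : ℕ} (w : (Fin n → ℚ) × Equiv.Perm (Fin n)) : Fin n → ℚ :=
  fun i => (∑ k ∈ Finset.range (orderOf w.2), w.1 ((w.2 ^ k)⁻¹ i)) / (orderOf w.2 : ℚ)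

/-- The weakly decreasing rearrangement of a vector `v ∈ ℚⁿ`. -/
def domRearrange {n : ℕ} (v : Fin n → ℚ) : Fin n → ℚ :=
  v ∘ Tuple.sort (fun i => -v i)

/-- `ϖ_{m,n} = (1,…,1,0,…,0)` with `m` ones. -/
def varpi (m n : ℕ) : Fin n → ℚ := fun i => if (i : ℕ) < m then 1 else 0

/-- `σ_{m,n} = t^{ϖ_{m,n}} u_{m,n}`, where `u_{m,n}` sends `i` to `i + m mod n`. -/
def sigmaW (m n : ℕ) : (Fin n → ℚ) × Equiv.Perm (Fin n) :=
  (varpi m n, (finRotate n) ^ m)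

lemma psum_univ {n : ℕ} (v : Fin n → ℚ) : psum v n = ∑ j, v j := by
  unfold psum
  rw [Finset.filter_true_of_mem (fun j _ => j.isLt)]

lemma psum_succ {n : ℕ} (v : Fin n → ℚ) (k : ℕ) (hk : k < n) :
    psum v (k + 1) = psum v k + v ⟨k, hk⟩ := by
  unfold psum
  rw [show (Finset.univ.filter (fun j : Fin n => (j : ℕ) < k + 1))
      = insert ⟨k, hk⟩ (Finset.univ.filter (fun j : Fin n => (j : ℕ) < k)) by
    ext j
    simp only [Finset.mem_insert, Finset.mem_filter, Finset.mem_univ, true_and]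
    constructor
    · intro h
      rcases Nat.lt_succ_iff_lt_or_eq.1 h with h | h
      · exact Or.inr h
      · exact Or.inl (Fin.ext h)
    · rintro (rfl | h)
      · exact Nat.lt_succ_self k
      · exact Nat.lt_succ_of_lt h]
  rw [Finset.sum_insert (by simp)]
  ring

lemma sum_shift {N : ℕ} (H : ℕ → ℚ) (hH : H N = H 0) :
    ∑ k ∈ Finset.range N, H (k + 1) = ∑ k ∈ Finset.range N, H k := by
  have h1 := Finset.sum_range_succ H N
  have h2 := Finset.sum_range_succ' H N
  linarith [h1, h2, hH]

/-- Newton point is invariant under the permutation. -/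
lemma newtonPt_apply {n : ℕ} (w : (Fin n → ℚ) × Equiv.Perm (Fin n)) (i : Fin n) :
    newtonPt w (w.2 i) = newtonPt w i := by
  unfold newtonPt
  congr 1
  have key : ∀ k : ℕ, w.1 ((w.2 ^ (k + 1))⁻¹ (w.2 i)) = w.1 ((w.2 ^ k)⁻¹ i) := by
    intro k
    congr 1
    have : (w.2 ^ (k + 1))⁻¹ (w.2 i) = (w.2 ^ k)⁻¹ ((w.2)⁻¹ (w.2 i)) := by
      rw [pow_succ']
      simp [mul_inv_rev, Equiv.Perm.mul_apply]
    rw [this, Equiv.Perm.inv_def w.2, Equiv.symm_apply_apply]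
  have hper : (fun k => w.1 ((w.2 ^ k)⁻¹ (w.2 i))) (orderOf w.2)
      = (fun k => w.1 ((w.2 ^ k)⁻¹ (w.2 i))) 0 := by
    simp [pow_orderOf_eq_one]
  calc ∑ k ∈ Finset.range (orderOf w.2), w.1 ((w.2 ^ k)⁻¹ (w.2 i))
      = ∑ k ∈ Finset.range (orderOf w.2), w.1 ((w.2 ^ (k+1))⁻¹ (w.2 i)) :=
        (sum_shift _ hper).symm
    _ = ∑ k ∈ Finset.range (orderOf w.2), w.1 ((w.2 ^ k)⁻¹ i) := by
        exact Finset.sum_congr rfl (fun k _ => key k)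

/-- image of an invariant set under a power. -/
lemma image_pow_eq {n : ℕ} (y : Equiv.Perm (Fin n)) (S : Finset (Fin n))
    (hS : ∀ i ∈ S, y i ∈ S) (k : ℕ) : S.image ⇑(y ^ k) = S := by
  induction k with
  | zero => simp
  | succ k ih =>
    have h1 : S.image ⇑y = S := by
      apply Finset.eq_of_subset_of_card_le
      · intro j hj
        simp only [Finset.mem_image] at hj
        obtain ⟨i, hi, rfl⟩ := hj
        exact hS i hi
      · rw [Finset.card_image_of_injective _ y.injective]
    rw [show ⇑(y ^ (k+1)) = ⇑(y ^ k) ∘ ⇑y by rw [pow_succ]; rfl,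
      ← Finset.image_image, h1, ih]

/-- sum of newton point over an invariant set equals sum of λ. -/
lemma sum_newtonPt {n : ℕ} (w : (Fin n → ℚ) × Equiv.Perm (Fin n)) (S : Finset (Fin n))
    (hS : ∀ i ∈ S, w.2 i ∈ S) :
    ∑ i ∈ S, newtonPt w i = ∑ i ∈ S, w.1 i := by
  unfold newtonPt
  rw [← Finset.sum_div, Finset.sum_comm]
  have hN : (0 : ℚ) < (orderOf w.2 : ℚ) := by
    exact_mod_cast orderOf_pos w.2
  have inner : ∀ k ∈ Finset.range (orderOf w.2),
      ∑ i ∈ S, w.1 ((w.2 ^ k)⁻¹ i) = ∑ i ∈ S, w.1 i := by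
    intro k _
    conv_lhs => rw [← image_pow_eq w.2 S hS k]
    rw [Finset.sum_image (fun a _ b _ h => (w.2 ^ k).injective h)]
    exact Finset.sum_congr rfl (fun j _ => by rw [Equiv.Perm.inv_def, Equiv.symm_apply_apply])
  rw [Finset.sum_congr rfl inner, Finset.sum_const, Finset.card_range, nsmul_eq_mul]
  field_simp

lemma sum_varpi (m n : ℕ) (hmn : m ≤ n) : ∑ i : Fin n, varpi m n i = m := by
  unfold varpi
  rw [Finset.sum_boole]
  congr 1
  have key := Finset.card_nbij (i := fun (i : Fin n) => (i : ℕ))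
    (s := Finset.univ.filter (fun i : Fin n => (i : ℕ) < m)) (t := Finset.range m)
    (by intro a ha
        simp only [Finset.coe_filter, Set.mem_setOf_eq] at ha
        simpa using ha.2)
    (by intro a _ b _ hab
        exact Fin.ext hab)
    (by intro b hb
        simp only [Finset.coe_range, Set.mem_Iio] at hb
        refine ⟨⟨b, lt_of_lt_of_le hb hmn⟩, ?_, rfl⟩
        simp [hb])
  rw [key, Finset.card_range]

lemma forward_dir {m n : ℕ} (hmn : m ≤ n)
    (μ : Fin n → ℤ) (v : Fin n → ℚ) (hv : Antitone v)
    (γ : Fin n → ℤ) (x : Equiv.Perm (Fin n))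
    (hγ : (∑ j, γ j) = (∑ j, μ j))
    (hdr : domRearrange (newtonPt (Wmul (fun i => (γ i : ℚ), x) (sigmaW m n))) = v) :
    psum v n = psum (fun i => (μ i : ℚ)) n + (m : ℚ) ∧
      ∀ j : Fin n, ∀ h : (j : ℕ) + 1 < n,
        v ⟨(j : ℕ) + 1, h⟩ < v j → ∃ z : ℤ, psum v ((j : ℕ) + 1) = (z : ℚ) := by
  set w : (Fin n → ℚ) × Equiv.Perm (Fin n) :=
    Wmul (fun i => (γ i : ℚ), x) (sigmaW m n) with hw
  set ν : Fin n → ℚ := newtonPt w with hν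
  set σ : Equiv.Perm (Fin n) := Tuple.sort (fun i => -ν i) with hσ
  have hvσ : ∀ i, v i = ν (σ i) := by
    intro i
    rw [← hdr]; rfl
  have hw1 : ∀ i, w.1 i = (γ i : ℚ) + varpi m n (x⁻¹ i) := fun i => rfl
  have hsumw1 : ∀ S : Finset (Fin n),
      (∀ i ∈ S, w.2 i ∈ S) → ∃ z : ℤ, ∑ i ∈ S, ν i = (z : ℚ) := by
    intro S hS
    refine ⟨∑ i ∈ S, (γ i + if ((x⁻¹ i : Fin n) : ℕ) < m then 1 else 0), ?_⟩
    rw [sum_newtonPt w S hS]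
    push_cast
    refine Finset.sum_congr rfl (fun i _ => ?_)
    rw [hw1]
    unfold varpi
    split <;> simp
  constructor
  · -- sum condition
    have h1 : psum v n = ∑ i, ν i := by
      rw [psum_univ, show (∑ j, v j) = ∑ j, ν (σ j) from
        Finset.sum_congr rfl (fun j _ => hvσ j), Equiv.sum_comp σ ν]
    have h2 : (∑ i, ν i) = ∑ i, w.1 i :=
      sum_newtonPt w Finset.univ (fun i _ => Finset.mem_univ _)
    have h3 : (∑ i, w.1 i) = (∑ i, (γ i : ℚ)) + ∑ i, varpi m n (x⁻¹ i) := by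
      rw [← Finset.sum_add_distrib]
      exact Finset.sum_congr rfl (fun i _ => hw1 i)
    have h4 : (∑ i, varpi m n (x⁻¹ i)) = (m : ℚ) := by
      rw [Equiv.sum_comp x⁻¹ (varpi m n), sum_varpi m n hmn]
    rw [h1, h2, h3, h4, psum_univ]
    have : (∑ i, ((γ i : ℚ))) = ∑ i, ((μ i : ℚ)) := by
      push_cast
      exact_mod_cast congrArg (fun z : ℤ => (z : ℚ)) hγ
    rw [this]
  · intro j h hjump
    set c : ℚ := v ⟨(j : ℕ) + 1, h⟩ with hc
    set S : Finset (Fin n) := Finset.univ.filter (fun i => c < ν i) with hS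
    set T : Finset (Fin n) := Finset.univ.filter (fun i : Fin n => (i : ℕ) < (j : ℕ) + 1)
      with hT
    have hST : S = T.image σ := by
      ext i'
      simp only [hS, hT, Finset.mem_filter, Finset.mem_univ, true_and, Finset.mem_image]
      constructor
      · intro hi'
        refine ⟨σ⁻¹ i', ?_, σ.apply_symm_apply i'⟩
        by_contra hcon
        push_neg at hcon
        have : v (σ⁻¹ i') ≤ c := by
          rw [hc]
          exact hv (by exact_mod_cast hcon)
        rw [hvσ (σ⁻¹ i'), Equiv.Perm.inv_def, σ.apply_symm_apply i'] at this
        exact absurd this (not_le.2 hi')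
      · rintro ⟨i, hi, rfl⟩
        have hij : v j ≤ v i := hv (by exact_mod_cast Nat.lt_succ_iff.1 hi)
        have : c < v i := lt_of_lt_of_le hjump hij
        rw [hvσ i] at this
        exact this
    have hSinv : ∀ i ∈ S, w.2 i ∈ S := by
      intro i hi
      simp only [hS, Finset.mem_filter, Finset.mem_univ, true_and] at hi ⊢
      rw [hν, newtonPt_apply w i]
      exact hi
    obtain ⟨z, hz⟩ := hsumw1 S hSinv
    refine ⟨z, ?_⟩
    rw [← hz, hST, Finset.sum_image (fun a _ b _ hab => σ.injective hab)]
    unfold psum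
    exact Finset.sum_congr rfl (fun i _ => hvσ i)

section blocks

variable {n : ℕ} (v : Fin n → ℚ)

/-- first index of the block (level set) of `i`. -/
def blkA (i : Fin n) : Fin n :=
  (Finset.univ.filter (fun j => v j = v i)).min' ⟨i, by simp⟩

/-- last index of the block of `i`. -/
def blkB (i : Fin n) : Fin n :=
  (Finset.univ.filter (fun j => v j = v i)).max' ⟨i, by simp⟩

/-- length of the block of `i`. -/
def blkL (i : Fin n) : ℕ := (blkB v i : ℕ) - (blkA v i : ℕ) + 1

variable {v}

lemma v_blkA (i : Fin n) : v (blkA v i) = v i := by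
  have := Finset.min'_mem (Finset.univ.filter (fun j => v j = v i)) ⟨i, by simp⟩
  simpa [blkA] using this

lemma v_blkB (i : Fin n) : v (blkB v i) = v i := by
  have := Finset.max'_mem (Finset.univ.filter (fun j => v j = v i)) ⟨i, by simp⟩
  simpa [blkB] using this

lemma blkA_le (i : Fin n) : blkA v i ≤ i :=
  Finset.min'_le _ _ (by simp)

lemma le_blkB (i : Fin n) : i ≤ blkB v i :=
  Finset.le_max' _ _ (by simp)

lemma blkA_le' (i j : Fin n) (h : v j = v i) : blkA v i ≤ j :=
  Finset.min'_le _ _ (by simp [h])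

lemma le_blkB' (i j : Fin n) (h : v j = v i) : j ≤ blkB v i :=
  Finset.le_max' _ _ (by simp [h])

lemma mem_blk (hv : Antitone v) {i j : Fin n} (h1 : blkA v i ≤ j) (h2 : j ≤ blkB v i) :
    v j = v i := by
  have hA := hv h1
  have hB := hv h2
  rw [v_blkA (v := v) i] at hA
  rw [v_blkB (v := v) i] at hB
  exact le_antisymm hA hB

lemma blkA_congr {i j : Fin n} (h : v j = v i) : blkA v j = blkA v i := by
  apply le_antisymm
  · exact blkA_le' j (blkA v i) (by rw [v_blkA (v := v) i, h])
  · exact blkA_le' i (blkA v j) (by rw [v_blkA (v := v) j, h])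

lemma blkB_congr {i j : Fin n} (h : v j = v i) : blkB v j = blkB v i := by
  apply le_antisymm
  · exact le_blkB' i (blkB v j) (by rw [v_blkB (v := v) j, h])
  · exact le_blkB' j (blkB v i) (by rw [v_blkB (v := v) i, h])

lemma blkL_congr {i j : Fin n} (h : v j = v i) : blkL v j = blkL v i := by
  unfold blkL
  rw [blkA_congr h, blkB_congr h]

variable (v) in
/-- the forward map of the block permutation. -/
def blkF : Fin n → Fin n := fun i =>
  if h : (i : ℕ) < (blkB v i : ℕ) then ⟨(i : ℕ) + 1, Nat.lt_of_le_of_lt h (blkB v i).isLt⟩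
  else blkA v i

variable (v) in
/-- the backward map of the block permutation. -/
def blkG : Fin n → Fin n := fun i =>
  if (blkA v i : ℕ) < (i : ℕ) then ⟨(i : ℕ) - 1, Nat.lt_of_le_of_lt (Nat.sub_le _ _) i.isLt⟩
  else blkB v i

/-- the block permutation: cycles each block of `v`. -/
def blkPerm (v : Fin n → ℚ) (hv : Antitone v) : Equiv.Perm (Fin n) where
  toFun := blkF v
  invFun := blkG v
  left_inv := by
    intro i
    unfold blkF blkG
    by_cases h : (i : ℕ) < (blkB v i : ℕ)
    · rw [dif_pos h]
      have hj : v ⟨(i : ℕ) + 1, Nat.lt_of_le_of_lt h (blkB v i).isLt⟩ = v i := by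
        apply mem_blk hv
        · exact le_trans (blkA_le i) (by simp [Fin.le_def])
        · simpa [Fin.le_def] using h
      rw [if_pos]
      · exact Fin.ext (by simp)
      · rw [blkA_congr hj]
        have : (blkA v i : ℕ) ≤ (i : ℕ) := blkA_le i
        simp only [Fin.val_mk]
        omega
    · rw [dif_neg h]
      have hiB : i = blkB v i := le_antisymm (le_blkB i) (not_lt.1 h)
      have hj : v (blkA v i) = v i := v_blkA i
      rw [if_neg, blkB_congr hj, ← hiB]
      rw [blkA_congr hj]
      omega
  right_inv := by
    intro i
    unfold blkF blkG
    by_cases h : (blkA v i : ℕ) < (i : ℕ)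
    · rw [if_pos h]
      have hlt : (i : ℕ) - 1 < n := Nat.lt_of_le_of_lt (Nat.sub_le _ _) i.isLt
      have hj : v ⟨(i : ℕ) - 1, hlt⟩ = v i := by
        apply mem_blk hv
        · simp only [Fin.le_def]
          omega
        · exact le_trans (by simp only [Fin.le_def]; omega) (le_blkB i)
      rw [dif_pos, Fin.ext_iff]
      · simp
        omega
      · rw [blkB_congr hj]
        have : (i : ℕ) ≤ (blkB v i : ℕ) := le_blkB i
        simp only []
        omega
    · rw [if_neg h]
      have hiA : i = blkA v i := le_antisymm (not_lt.1 h) (blkA_le i)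
      have hj : v (blkB v i) = v i := v_blkB i
      rw [dif_neg, blkA_congr hj, ← hiA]
      rw [blkB_congr hj]
      omega

end blocks

lemma blkPerm_pow {n : ℕ} {v : Fin n → ℚ} (hv : Antitone v) (i : Fin n) (k : ℕ) :
    (((blkPerm v hv ^ k) i : Fin n) : ℕ)
      = (blkA v i : ℕ) + (((i : ℕ) - (blkA v i : ℕ)) + k) % blkL v i := by
  have ha : (blkA v i : ℕ) ≤ i := blkA_le i
  have hb : (i : ℕ) ≤ (blkB v i : ℕ) := le_blkB i
  have hl : 0 < blkL v i := Nat.succ_pos _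
  induction k with
  | zero =>
    rw [pow_zero, Equiv.Perm.one_apply]
    unfold blkL at *
    rw [Nat.mod_eq_of_lt (by omega)]
    omega
  | succ k ih =>
    set y := blkPerm v hv with hy
    set a := ((blkA v i : Fin n) : ℕ) with hA
    set o := (i : ℕ) - a with ho
    set L := blkL v i with hL
    set j := (y ^ k) i with hj
    have hr : (o + k) % L < L := Nat.mod_lt _ hl
    have hLeq : L = (blkB v i : ℕ) - (blkA v i : ℕ) + 1 := rfl
    have hjval : (j : ℕ) = a + (o + k) % L := ih
    have hjA : blkA v i ≤ j := by rw [Fin.le_def, hjval]; omega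
    have hjB : j ≤ blkB v i := by
      rw [Fin.le_def, hjval]
      omega
    have hvj : v j = v i := mem_blk hv hjA hjB
    have hstep : (y ^ (k + 1)) i = y j := by rw [pow_succ', Equiv.Perm.mul_apply]
    rw [hstep]
    show ((blkF v j : Fin n) : ℕ) = a + (o + (k + 1)) % L
    unfold blkF
    have hBj : (blkB v j : ℕ) = (blkB v i : ℕ) := by rw [blkB_congr hvj]
    have hAj : ((blkA v j : Fin n) : ℕ) = a := by rw [blkA_congr hvj]
    have hmod : (o + (k + 1)) % L = ((o + k) % L + 1 % L) % L := by
      rw [show o + (k + 1) = o + k + 1 by ring, Nat.add_mod]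
    by_cases hc : (j : ℕ) < (blkB v j : ℕ)
    · rw [dif_pos hc]
      simp only [Fin.val_mk]
      have h1 : (o + k) % L + 1 < L := by
        rw [hBj] at hc
        rw [hjval] at hc
        omega
      rw [hmod, Nat.mod_eq_of_lt (show 1 < L by omega), Nat.mod_eq_of_lt h1, hjval]
      omega
    · rw [dif_neg hc]
      have hjb : (j : ℕ) = (blkB v i : ℕ) := by rw [hBj] at hc; omega
      have hrL : (o + k) % L = L - 1 := by
        rw [hjval] at hjb
        omega
      have hz : ((o + k) % L + 1 % L) % L = 0 := by
        rcases Nat.lt_or_ge 1 L with h2 | h2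
        · rw [hrL, Nat.mod_eq_of_lt h2, show L - 1 + 1 = L by omega, Nat.mod_self]
        · have : L = 1 := by omega
          simp [this, Nat.mod_one]
      rw [hmod, hz, hAj]
      omega

lemma blkL_dvd_order {n : ℕ} {v : Fin n → ℚ} (hv : Antitone v) (i : Fin n) :
    blkL v i ∣ orderOf (blkPerm v hv) := by
  set N := orderOf (blkPerm v hv) with hN
  have h := blkPerm_pow hv i N
  rw [pow_orderOf_eq_one, Equiv.Perm.one_apply] at h
  have ha : (blkA v i : ℕ) ≤ i := blkA_le i
  have hb : (i : ℕ) ≤ (blkB v i : ℕ) := le_blkB i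
  have hLeq : blkL v i = (blkB v i : ℕ) - (blkA v i : ℕ) + 1 := rfl
  have hoL : (i : ℕ) - (blkA v i : ℕ) < blkL v i := by omega
  have hmod : ((i : ℕ) - (blkA v i : ℕ) + N) % blkL v i = (i : ℕ) - (blkA v i : ℕ) := by
    omega
  have hmod2 : ((i : ℕ) - (blkA v i : ℕ) + N) % blkL v i
      = ((i : ℕ) - (blkA v i : ℕ)) % blkL v i := by
    rw [hmod, Nat.mod_eq_of_lt hoL]
  have := (Nat.modEq_iff_dvd' (Nat.le_add_right _ N)).mp hmod2.symm
  rwa [Nat.add_sub_cancel_left] at this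

lemma v_inv_pow {n : ℕ} {v : Fin n → ℚ} (hv : Antitone v) (i : Fin n) (k : ℕ) :
    v ((blkPerm v hv ^ k)⁻¹ i) = v i := by
  set j := (blkPerm v hv ^ k)⁻¹ i with hj
  have hij : (blkPerm v hv ^ k) j = i := by
    rw [hj, Equiv.Perm.inv_def, Equiv.apply_symm_apply]
  have h := blkPerm_pow hv j k
  rw [hij] at h
  have hr : ((j : ℕ) - (blkA v j : ℕ) + k) % blkL v j < blkL v j :=
    Nat.mod_lt _ (Nat.succ_pos _)
  have hLeq : blkL v j = (blkB v j : ℕ) - (blkA v j : ℕ) + 1 := rfl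
  have haj : (blkA v j : ℕ) ≤ (j : ℕ) := blkA_le j
  have hbj : (j : ℕ) ≤ (blkB v j : ℕ) := le_blkB j
  exact (mem_blk hv (by rw [Fin.le_def]; omega) (by rw [Fin.le_def]; omega)).symm

lemma inv_pow_eq_blkA {n : ℕ} {v : Fin n → ℚ} (hv : Antitone v) (i : Fin n) (k : ℕ) :
    (blkPerm v hv ^ k)⁻¹ i = blkA v i ↔ k % blkL v i = (i : ℕ) - (blkA v i : ℕ) := by
  rw [Equiv.Perm.inv_eq_iff_eq]
  have h := blkPerm_pow hv (blkA v i) k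
  have h1 : blkA v (blkA v i) = blkA v i := blkA_congr (v_blkA i)
  have h2 : blkL v (blkA v i) = blkL v i := blkL_congr (v_blkA i)
  rw [h1, h2, Nat.sub_self, Nat.zero_add] at h
  have ha : (blkA v i : ℕ) ≤ i := blkA_le i
  have hb : (i : ℕ) ≤ (blkB v i : ℕ) := le_blkB i
  have hLeq : blkL v i = (blkB v i : ℕ) - (blkA v i : ℕ) + 1 := rfl
  have hr : k % blkL v i < blkL v i := Nat.mod_lt _ (Nat.succ_pos _)
  rw [Fin.ext_iff, h]
  omega

lemma count_mod {N L o : ℕ} (hd : L ∣ N) (ho : o < L) :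
    ((Finset.range N).filter (fun k => k % L = o)).card = N / L := by
  have hL : 0 < L := lt_of_le_of_lt (Nat.zero_le o) ho
  rw [← Finset.card_range (N / L)]
  apply Finset.card_nbij' (i := fun k => k / L) (j := fun q => q * L + o)
  · intro k hk
    simp only [Finset.mem_coe, Finset.mem_filter, Finset.mem_range] at hk ⊢
    exact Nat.div_lt_div_of_lt_of_dvd hd hk.1
  · intro q hq
    simp only [Finset.mem_coe, Finset.mem_filter, Finset.mem_range] at hq ⊢
    constructor
    · have h2 : (q + 1) * L ≤ (N / L) * L := Nat.mul_le_mul_right L (by omega)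
      rw [Nat.div_mul_cancel hd] at h2
      calc q * L + o < q * L + L := by omega
        _ = (q + 1) * L := by ring
        _ ≤ N := h2
    · rw [Nat.mul_comm, Nat.mul_add_mod, Nat.mod_eq_of_lt ho]
  · intro k hk
    simp only [Finset.mem_coe, Finset.mem_filter, Finset.mem_range] at hk
    show k / L * L + o = k
    rw [← hk.2, Nat.div_add_mod']
  · intro q hq
    show (q * L + o) / L = q
    rw [Nat.add_comm, Nat.add_mul_div_right _ _ hL, Nat.div_eq_of_lt ho, Nat.zero_add]

lemma psum_block {n : ℕ} {v : Fin n → ℚ} (hv : Antitone v) (i : Fin n) :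
    psum v ((blkB v i : ℕ) + 1) = psum v (blkA v i : ℕ) + (blkL v i : ℚ) * v i := by
  have ha : (blkA v i : ℕ) ≤ i := blkA_le i
  have hb : (i : ℕ) ≤ (blkB v i : ℕ) := le_blkB i
  have hLeq : blkL v i = (blkB v i : ℕ) - (blkA v i : ℕ) + 1 := rfl
  have key : ∀ r, r ≤ blkL v i →
      psum v ((blkA v i : ℕ) + r) = psum v (blkA v i : ℕ) + (r : ℚ) * v i := by
    intro r
    induction r with
    | zero => simp
    | succ r ih =>
      intro hr
      have hrn : (blkA v i : ℕ) + r < n := lt_of_le_of_lt (by omega) (blkB v i).isLt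
      rw [show (blkA v i : ℕ) + (r + 1) = ((blkA v i : ℕ) + r) + 1 by omega,
        psum_succ v _ hrn, ih (by omega)]
      have hval : v ⟨(blkA v i : ℕ) + r, hrn⟩ = v i :=
        mem_blk hv (by rw [Fin.le_def]; simp) (by rw [Fin.le_def]; simp only [Fin.val_mk]; omega)
      rw [hval]
      push_cast
      ring
  have := key (blkL v i) le_rfl
  rwa [show (blkA v i : ℕ) + blkL v i = (blkB v i : ℕ) + 1 by omega] at this

lemma newtonPt_blk {n : ℕ} {v : Fin n → ℚ} (hv : Antitone v) (lam : Fin n → ℚ)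
    (hlam : ∀ i, lam i = if i = blkA v i then (blkL v i : ℚ) * v i else 0) (i : Fin n) :
    newtonPt (lam, blkPerm v hv) i = v i := by
  set y := blkPerm v hv with hy
  set N := orderOf y with hN
  set L := blkL v i with hL
  set o := (i : ℕ) - (blkA v i : ℕ) with ho
  have hNpos : 0 < N := orderOf_pos y
  have hLpos : 0 < L := Nat.succ_pos _
  have hdvd : L ∣ N := blkL_dvd_order hv i
  have hoL : o < L := by
    have ha : (blkA v i : ℕ) ≤ i := blkA_le i
    have hb : (i : ℕ) ≤ (blkB v i : ℕ) := le_blkB i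
    have hLeq : L = (blkB v i : ℕ) - (blkA v i : ℕ) + 1 := rfl
    omega
  have hterm : ∀ k, lam ((y ^ k)⁻¹ i) = if k % L = o then (L : ℚ) * v i else 0 := by
    intro k
    by_cases hc : (y ^ k)⁻¹ i = blkA v i
    · rw [hc, hlam, if_pos (blkA_congr (v_blkA i)).symm,
        if_pos ((inv_pow_eq_blkA hv i k).mp hc), blkL_congr (v_blkA (v := v) i), v_blkA (v := v) i]
    · rw [hlam, if_neg, if_neg (mt (inv_pow_eq_blkA hv i k).mpr hc)]
      rw [blkA_congr (v_inv_pow hv i k)]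
      exact hc
  show (∑ k ∈ Finset.range N, lam ((y ^ k)⁻¹ i)) / (N : ℚ) = v i
  rw [Finset.sum_congr rfl (fun k _ => hterm k), ← Finset.sum_filter, Finset.sum_const,
    count_mod hdvd hoL, nsmul_eq_mul]
  have hcancel : ((N / L : ℕ) : ℚ) * (L : ℚ) = (N : ℚ) := by
    rw [← Nat.cast_mul, Nat.div_mul_cancel hdvd]
  rw [show ((N / L : ℕ) : ℚ) * ((L : ℚ) * v i) = ((N / L : ℕ) : ℚ) * (L : ℚ) * v i by ring,
    hcancel, mul_div_assoc]
  field_simp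

lemma psum_zero {n : ℕ} (v : Fin n → ℚ) : psum v 0 = 0 := by
  unfold psum
  simp

lemma backward_dir {m n : ℕ} (hmn : m < n)
    (μ : Fin n → ℤ) (v : Fin n → ℚ) (hv : Antitone v)
    (h1 : psum v n = psum (fun i => (μ i : ℚ)) n + (m : ℚ))
    (h2 : ∀ j : Fin n, ∀ h : (j : ℕ) + 1 < n,
      v ⟨(j : ℕ) + 1, h⟩ < v j → ∃ z : ℤ, psum v ((j : ℕ) + 1) = (z : ℚ)) :
    ∃ (γ : Fin n → ℤ) (x : Equiv.Perm (Fin n)),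
      (∑ j, γ j) = (∑ j, μ j) ∧
      domRearrange (newtonPt (Wmul (fun i => (γ i : ℚ), x) (sigmaW m n))) = v := by
  -- integrality at the left boundary of each block
  have hbA : ∀ i : Fin n, ∃ z : ℤ, psum v (blkA v i : ℕ) = (z : ℚ) := by
    intro i
    rcases Nat.eq_zero_or_pos (blkA v i : ℕ) with h0 | h0
    · exact ⟨0, by rw [h0, psum_zero]; norm_num⟩
    · set a := ((blkA v i : Fin n) : ℕ) with hA
      have han : a - 1 < n := Nat.lt_of_le_of_lt (Nat.sub_le _ _) (blkA v i).isLt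
      have hsucc : (a - 1) + 1 = a := by omega
      have heta : (⟨a, by omega⟩ : Fin n) = blkA v i := Fin.ext rfl
      have hlt : v ⟨(a - 1) + 1, by omega⟩ < v ⟨a - 1, han⟩ := by
        have hle : v ⟨(a - 1) + 1, by omega⟩ ≤ v ⟨a - 1, han⟩ := hv (by
          rw [Fin.le_def]; simp only [Fin.val_mk]; omega)
        rcases lt_or_eq_of_le hle with h | h
        · exact h
        · exfalso
          have hv1 : v ⟨a - 1, han⟩ = v i := by
            rw [← h]
            have : (⟨(a - 1) + 1, by omega⟩ : Fin n) = blkA v i := Fin.ext (by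
              simp only [Fin.val_mk]; omega)
            rw [this, v_blkA (v := v) i]
          have := blkA_le' i ⟨a - 1, han⟩ hv1
          rw [Fin.le_def] at this
          simp only [Fin.val_mk] at this
          omega
      obtain ⟨z, hz⟩ := h2 ⟨a - 1, han⟩ (by simp only [Fin.val_mk]; omega) hlt
      exact ⟨z, by rw [← hz]; congr 1; simp only [Fin.val_mk]; omega⟩
  -- integrality at the right boundary of each block
  have hbB : ∀ i : Fin n, ∃ z : ℤ, psum v ((blkB v i : ℕ) + 1) = (z : ℚ) := by
    intro i
    rcases eq_or_lt_of_le (Nat.succ_le_of_lt (blkB v i).isLt) with h0 | h0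
    · refine ⟨(∑ j, μ j) + m, ?_⟩
      rw [show ((blkB v i : Fin n) : ℕ) + 1 = n from h0, h1, psum_univ]
      push_cast
      ring
    · have hlt : v ⟨((blkB v i : Fin n) : ℕ) + 1, h0⟩ < v (blkB v i) := by
        have hle : v ⟨((blkB v i : Fin n) : ℕ) + 1, h0⟩ ≤ v (blkB v i) := hv (by
          rw [Fin.le_def]; simp only [Fin.val_mk]; omega)
        rcases lt_or_eq_of_le hle with h | h
        · exact h
        · exfalso
          have hv1 : v ⟨((blkB v i : Fin n) : ℕ) + 1, h0⟩ = v i := by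
            rw [h, v_blkB (v := v) i]
          have := le_blkB' i _ hv1
          rw [Fin.le_def] at this
          simp only [Fin.val_mk] at this
          omega
      exact h2 (blkB v i) h0 hlt
  -- block sums are integers
  have hLint : ∀ i : Fin n, ∃ z : ℤ, (blkL v i : ℚ) * v i = (z : ℚ) := by
    intro i
    obtain ⟨zA, hzA⟩ := hbA i
    obtain ⟨zB, hzB⟩ := hbB i
    refine ⟨zB - zA, ?_⟩
    have := psum_block hv i
    rw [hzA, hzB] at this
    push_cast
    linarith
  classical
  set lam : Fin n → ℚ := fun i => if i = blkA v i then (blkL v i : ℚ) * v i else 0 with hlam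
  set lamZ : Fin n → ℤ := fun i => if i = blkA v i then (hLint i).choose else 0 with hlamZ
  have hcast : ∀ i, (lamZ i : ℚ) = lam i := by
    intro i
    show ((if i = blkA v i then (hLint i).choose else 0 : ℤ) : ℚ)
      = if i = blkA v i then (blkL v i : ℚ) * v i else 0
    by_cases hc : i = blkA v i
    · rw [if_pos hc, if_pos hc]
      exact ((hLint i).choose_spec).symm
    · rw [if_neg hc, if_neg hc]
      norm_num
  set y : Equiv.Perm (Fin n) := blkPerm v hv with hy
  set x : Equiv.Perm (Fin n) := y * ((finRotate n) ^ m)⁻¹ with hx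
  set γ : Fin n → ℤ := fun i =>
    lamZ i - (if ((x⁻¹ i : Fin n) : ℕ) < m then 1 else 0) with hγ
  have hW : Wmul (fun i => (γ i : ℚ), x) (sigmaW m n) = (lam, y) := by
    unfold Wmul sigmaW
    refine Prod.ext ?_ ?_
    · show (fun i => (γ i : ℚ)) + permAct x (varpi m n) = lam
      funext i
      show (γ i : ℚ) + varpi m n (x⁻¹ i) = lam i
      rw [hγ, ← hcast i]
      unfold varpi
      push_cast
      split <;> ring
    · show x * (finRotate n) ^ m = y
      rw [hx, inv_mul_cancel_right]
  have hNv : newtonPt (lam, y) = v := funext (newtonPt_blk hv lam (fun i => rfl))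
  have hmono : Monotone (fun i => -v i) := fun a b hab => neg_le_neg (hv hab)
  have hsort : domRearrange v = v := by
    unfold domRearrange
    rw [Tuple.sort_eq_refl_iff_monotone.mpr hmono]
    rfl
  refine ⟨γ, x, ?_, ?_⟩
  · -- sums agree
    have hsum1 : (∑ i, lam i) = ∑ i, v i := by
      rw [← sum_newtonPt (lam, y) Finset.univ (fun i _ => Finset.mem_univ _)]
      exact Finset.sum_congr rfl (fun i _ => by rw [show newtonPt (lam, y) i = v i from congrFun hNv i])
    have hsum2 : (∑ i, (if ((x⁻¹ i : Fin n) : ℕ) < m then (1 : ℚ) else 0)) = m := by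
      have := Equiv.sum_comp x⁻¹ (varpi m n)
      rw [sum_varpi m n (le_of_lt hmn)] at this
      exact this
    have : (∑ i, (γ i : ℚ)) = ∑ i, (μ i : ℚ) := by
      have expand : (∑ i, (γ i : ℚ))
          = (∑ i, (lamZ i : ℚ)) - ∑ i, (if ((x⁻¹ i : Fin n) : ℕ) < m then (1 : ℚ) else 0) := by
        rw [← Finset.sum_sub_distrib]
        refine Finset.sum_congr rfl (fun i _ => ?_)
        rw [hγ]
        push_cast
        split <;> ring
      rw [expand, hsum2, show (∑ i, (lamZ i : ℚ)) = ∑ i, lam i from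
        Finset.sum_congr rfl (fun i _ => hcast i), hsum1]
      have hμ : psum (fun i => (μ i : ℚ)) n = ∑ i, (μ i : ℚ) := psum_univ _
      rw [← psum_univ v, h1, hμ]
      ring
    exact_mod_cast this
  · rw [hW, hNv, hsort]


/-- Let `0 < m < n`, `μ ∈ ℤⁿ` dominant and `v ∈ ℚⁿ` dominant. Then
`v` is the dominant Newton point of `w σ_{m,n}` for some `w = (γ, x) ∈ ℤⁿ ⋊ Sₙ` with
`Σγ = Σμ` if and only if `Σ_{j=1}^n v_j = Σ_{j=1}^n μ_j + m` and `Σ_{j=1}^k v_j ∈ ℤ`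
for every `k ∈ {1,…,n-1}` with `v_k > v_{k+1}`. -/
theorem newton_point_criterion (m n : ℕ) (hn : 1 ≤ n) (hm : 0 < m) (hmn : m < n)
    (μ : Fin n → ℤ) (hμ : Antitone μ) (v : Fin n → ℚ) (hv : Antitone v) :
    (∃ (γ : Fin n → ℤ) (x : Equiv.Perm (Fin n)),
      (∑ j, γ j) = (∑ j, μ j) ∧
      domRearrange (newtonPt (Wmul (fun i => (γ i : ℚ), x) (sigmaW m n))) = v) ↔
    (psum v n = psum (fun i => (μ i : ℚ)) n + (m : ℚ) ∧
      ∀ j : Fin n, ∀ h : (j : ℕ) + 1 < n,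
        v ⟨(j : ℕ) + 1, h⟩ < v j → ∃ z : ℤ, psum v ((j : ℕ) + 1) = (z : ℚ)) := by
  constructor
  · rintro ⟨γ, x, hγ, hdr⟩
    exact forward_dir (le_of_lt hmn) μ v hv γ x hγ hdr
  · rintro ⟨h1, h2⟩
    exact backward_dir hmn μ v hv h1 h2
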